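/- Let a² ≥ 0, b² > 0, c² > 0, s₊ = (b² + √(b⁴ + 24a²c²))/(4c²), f_* = −(a²/3)s₊² − (2b²/27)s₊³ + (c²/9)s₊⁴, and h(x,y) = (−a²/2 + (c²/4)(x² + y²))(x² + y²) − (b²√6/18)·y·(y² − 3x²) − f_*. There exists C > 0, depending only on a², b², c², such that for every nonzero integer k and every R ≥ 1, the functions w̄₀(r) ≡ −s₊/√6 and w̄₁(r) = (s₊/√2)·min(r,1) satisfy ∫₀^R { (1/2)(w̄₀'(r)² + w̄₁'(r)²) + (k²/(2r²)) w̄₁(r)² + h(w̄₁(r), w̄₀(r)) } r dr ≤ C k² + (s₊² k²/4) ln R. -/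

import Mathlib

noncomputable section

open MeasureTheory

namespace LdGStmt17

/-- Step 1 of Lemma 4.1 of the paper. With
`s₊ = (b² + √(b⁴+24a²c²))/(4c²)`, `f_*` the normalizing constant, and
`h(x,y) = (−a²/2 + (c²/4)(x²+y²))(x²+y²) − (b²√6/18)y(y²−3x²) − f_*`, there is `C > 0`
(depending only on `a²,b²,c²`) such that for every nonzero integer `k` and every `R ≥ 1`,
the test functions `w̄₀ ≡ −s₊/√6`, `w̄₁(r) = (s₊/√2)min(r,1)` satisfy
`∫₀^R {½(w̄₀'² + w̄₁'²) + (k²/2r²)w̄₁² + h(w̄₁,w̄₀)} r dr ≤ Ck² + (s₊²k²/4) ln R`. -/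
theorem stmt_17 (a2 b2 c2 : ℝ) (ha : 0 ≤ a2) (hb : 0 < b2) (hc : 0 < c2)
    (s : ℝ) (hs : s = (b2 + Real.sqrt (b2 ^ 2 + 24 * a2 * c2)) / (4 * c2))
    (fstar : ℝ)
    (hf : fstar = -(a2 / 3) * s ^ 2 - (2 * b2 / 27) * s ^ 3 + (c2 / 9) * s ^ 4) :
    ∃ C : ℝ, 0 < C ∧
      ∀ k : ℤ, k ≠ 0 → ∀ R : ℝ, 1 ≤ R →
        (∫ r in Set.Ioc (0 : ℝ) R,
          ((1 / 2) * ((deriv (fun _ : ℝ => -(s / Real.sqrt 6)) r) ^ 2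
              + (deriv (fun t : ℝ => s / Real.sqrt 2 * min t 1) r) ^ 2)
            + (k : ℝ) ^ 2 / (2 * r ^ 2) * (s / Real.sqrt 2 * min r 1) ^ 2
            + ((-(a2 / 2) + (c2 / 4) * ((s / Real.sqrt 2 * min r 1) ^ 2
                  + (-(s / Real.sqrt 6)) ^ 2))
                  * ((s / Real.sqrt 2 * min r 1) ^ 2 + (-(s / Real.sqrt 6)) ^ 2)
                - (b2 * Real.sqrt 6 / 18) * (-(s / Real.sqrt 6))
                  * ((-(s / Real.sqrt 6)) ^ 2 - 3 * (s / Real.sqrt 2 * min r 1) ^ 2)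
                - fstar)) * r)
          ≤ C * (k : ℝ) ^ 2 + s ^ 2 * (k : ℝ) ^ 2 / 4 * Real.log R := by
  have hq2 : (Real.sqrt 2) ^ 2 = 2 := Real.sq_sqrt (by norm_num)
  have hq6 : (Real.sqrt 6) ^ 2 = 6 := Real.sq_sqrt (by norm_num)
  have hq2pos : 0 < Real.sqrt 2 := Real.sqrt_pos.mpr (by norm_num)
  have hq6pos : 0 < Real.sqrt 6 := Real.sqrt_pos.mpr (by norm_num)
  have e1 : (s / Real.sqrt 2) ^ 2 = s ^ 2 / 2 := by rw [div_pow, hq2]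
  have e2 : (-(s / Real.sqrt 6)) ^ 2 = s ^ 2 / 6 := by rw [neg_pow, div_pow, hq6]; ring
  have e3 : (b2 * Real.sqrt 6 / 18) * (-(s / Real.sqrt 6)) = -(b2 * s / 18) := by
    field_simp
  -- the h-value at the limit point vanishes
  have hzero :
      (-(a2 / 2) + (c2 / 4) * ((s / Real.sqrt 2 * 1) ^ 2 + (-(s / Real.sqrt 6)) ^ 2))
          * ((s / Real.sqrt 2 * 1) ^ 2 + (-(s / Real.sqrt 6)) ^ 2)
        - (b2 * Real.sqrt 6 / 18) * (-(s / Real.sqrt 6))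
          * ((-(s / Real.sqrt 6)) ^ 2 - 3 * (s / Real.sqrt 2 * 1) ^ 2) - fstar = 0 := by
    rw [mul_one, e1, e2, e3, hf]; ring
  -- the potential term as a continuous function of r
  set ψ : ℝ → ℝ := fun r =>
    (-(a2 / 2) + (c2 / 4) * ((s / Real.sqrt 2 * min r 1) ^ 2
        + (-(s / Real.sqrt 6)) ^ 2))
        * ((s / Real.sqrt 2 * min r 1) ^ 2 + (-(s / Real.sqrt 6)) ^ 2)
      - (b2 * Real.sqrt 6 / 18) * (-(s / Real.sqrt 6))
        * ((-(s / Real.sqrt 6)) ^ 2 - 3 * (s / Real.sqrt 2 * min r 1) ^ 2)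
      - fstar with hψ
  have hψc : Continuous ψ := by
    have hmin : Continuous fun r : ℝ => min r 1 := continuous_id.min continuous_const
    fun_prop
  obtain ⟨M, hM⟩ := (isCompact_Icc (a := (0:ℝ)) (b := 1)).exists_bound_of_continuousOn
    hψc.continuousOn
  have hM0 : 0 ≤ M := le_trans (norm_nonneg _) (hM 0 ⟨le_refl _, zero_le_one⟩)
  have harith : ∀ K : ℝ, 1 ≤ K →
      ((1 / 2) * (s ^ 2 / 2) + K * (s ^ 2 / 2) / 2 + M) / 2
        ≤ (s ^ 2 / 4 + M / 2 + 1) * K := by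
    intro K hK
    nlinarith [sq_nonneg s, hM0]
  refine ⟨s ^ 2 / 4 + M / 2 + 1, by positivity, ?_⟩
  intro k hk R hR
  have hk1 : (1 : ℝ) ≤ (k : ℝ) ^ 2 := by
    have : (1 : ℤ) ≤ k ^ 2 := by rcases hk.lt_or_gt with h | h <;> nlinarith
    exact_mod_cast this
  have hR0 : (0 : ℝ) < R := lt_of_lt_of_le one_pos hR
  set F : ℝ → ℝ := fun r =>
    ((1 / 2) * ((deriv (fun _ : ℝ => -(s / Real.sqrt 6)) r) ^ 2
          + (deriv (fun t : ℝ => s / Real.sqrt 2 * min t 1) r) ^ 2)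
        + (k : ℝ) ^ 2 / (2 * r ^ 2) * (s / Real.sqrt 2 * min r 1) ^ 2
        + ((-(a2 / 2) + (c2 / 4) * ((s / Real.sqrt 2 * min r 1) ^ 2
              + (-(s / Real.sqrt 6)) ^ 2))
              * ((s / Real.sqrt 2 * min r 1) ^ 2 + (-(s / Real.sqrt 6)) ^ 2)
            - (b2 * Real.sqrt 6 / 18) * (-(s / Real.sqrt 6))
              * ((-(s / Real.sqrt 6)) ^ 2 - 3 * (s / Real.sqrt 2 * min r 1) ^ 2)
            - fstar)) * r with hFdef
  set f₁ : ℝ → ℝ := fun r =>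
    ((1 / 2) * (s ^ 2 / 2) + (k : ℝ) ^ 2 * (s ^ 2 / 2) / 2 + ψ r) * r with hf₁
  set f₂ : ℝ → ℝ := fun r => s ^ 2 * (k : ℝ) ^ 2 / 4 * r⁻¹ with hf₂
  -- pointwise identities
  have claim1 : ∀ r ∈ Set.Ioo (0 : ℝ) 1, F r = f₁ r := by
    intro r hr
    have hmin : min r 1 = r := min_eq_left hr.2.le
    have hder : deriv (fun t : ℝ => s / Real.sqrt 2 * min t 1) r = s / Real.sqrt 2 := by
      have hev : (fun t : ℝ => s / Real.sqrt 2 * min t 1)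
          =ᶠ[nhds r] fun t => s / Real.sqrt 2 * t := by
        filter_upwards [Ioo_mem_nhds hr.1 hr.2] with t ht
        rw [min_eq_left ht.2.le]
      rw [hev.deriv_eq]
      simpa using ((hasDerivAt_id r).const_mul (s / Real.sqrt 2)).deriv
    have hr0 : r ≠ 0 := hr.1.ne'
    rw [hFdef, hf₁, hψ]
    simp only [deriv_const', hder, hmin]
    rw [mul_pow, div_pow, hq2]
    field_simp
    ring
  have claim2 : ∀ r ∈ Set.Ioc (1 : ℝ) R, F r = f₂ r := by
    intro r hr
    have hmin : min r 1 = 1 := min_eq_right hr.1.le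
    have hder : deriv (fun t : ℝ => s / Real.sqrt 2 * min t 1) r = 0 := by
      have hev : (fun t : ℝ => s / Real.sqrt 2 * min t 1)
          =ᶠ[nhds r] fun _ => s / Real.sqrt 2 * 1 := by
        filter_upwards [Ioi_mem_nhds hr.1] with t ht
        rw [min_eq_right ht.le]
      rw [hev.deriv_eq, deriv_const']
    have hr0 : r ≠ 0 := (lt_trans one_pos hr.1).ne'
    rw [hFdef, hf₂]
    simp only [deriv_const', hder, hmin]
    rw [hzero, mul_one, div_pow, hq2]
    field_simp
    ring
  -- integrability
  have hf₁c : Continuous f₁ := by fun_prop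
  have hf₁int : IntegrableOn f₁ (Set.Ioc (0 : ℝ) 1) := hf₁c.integrableOn_Ioc
  have haeF : F =ᶠ[ae (volume.restrict (Set.Ioc (0 : ℝ) 1))] f₁ := by
    have h1 : ∀ᵐ r ∂(volume.restrict (Set.Ioc (0 : ℝ) 1)), r ∈ Set.Ioc (0 : ℝ) 1 :=
      ae_restrict_mem measurableSet_Ioc
    have h2 : ∀ᵐ r : ℝ, r ≠ 1 := by
      refine ae_iff.mpr ?_
      simpa using measure_singleton (1 : ℝ)
    filter_upwards [h1, ae_restrict_of_ae h2] with r hr hr1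
    exact claim1 r ⟨hr.1, lt_of_le_of_ne hr.2 hr1⟩
  have hFint1 : IntegrableOn F (Set.Ioc (0 : ℝ) 1) := hf₁int.congr haeF.symm
  have hf₂int : IntegrableOn f₂ (Set.Ioc (1 : ℝ) R) := by
    have : ContinuousOn f₂ (Set.Icc (1 : ℝ) R) := by
      apply continuousOn_const.mul
      exact ContinuousOn.inv₀ continuousOn_id fun r hr => (lt_of_lt_of_le one_pos hr.1).ne'
    exact (this.integrableOn_Icc).mono_set Set.Ioc_subset_Icc_self
  have hFint2 : IntegrableOn F (Set.Ioc (1 : ℝ) R) :=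
    hf₂int.congr_fun (fun r hr => (claim2 r hr).symm) measurableSet_Ioc
  -- split the integral
  have hsplit : (∫ r in Set.Ioc (0 : ℝ) R, F r)
      = (∫ r in Set.Ioc (0 : ℝ) 1, F r) + ∫ r in Set.Ioc (1 : ℝ) R, F r := by
    rw [← Set.Ioc_union_Ioc_eq_Ioc (by norm_num : (0:ℝ) ≤ 1) hR]
    exact setIntegral_union (Set.Ioc_disjoint_Ioc_of_le le_rfl) measurableSet_Ioc hFint1 hFint2
  -- value of the second piece
  have hval2 : (∫ r in Set.Ioc (1 : ℝ) R, F r) = s ^ 2 * (k : ℝ) ^ 2 / 4 * Real.log R := by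
    rw [setIntegral_congr_fun measurableSet_Ioc claim2, hf₂,
      ← intervalIntegral.integral_of_le hR, intervalIntegral.integral_const_mul,
      integral_inv_of_pos one_pos hR0, div_one]
  -- bound on the first piece
  have hbd1 : (∫ r in Set.Ioc (0 : ℝ) 1, F r)
      ≤ (s ^ 2 / 4 + M / 2 + 1) * (k : ℝ) ^ 2 := by
    rw [integral_congr_ae haeF]
    have hmono : (∫ r in Set.Ioc (0 : ℝ) 1, f₁ r)
        ≤ ∫ r in Set.Ioc (0 : ℝ) 1,
            ((1 / 2) * (s ^ 2 / 2) + (k : ℝ) ^ 2 * (s ^ 2 / 2) / 2 + M) * r := by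
      refine setIntegral_mono_on hf₁int ?_ measurableSet_Ioc ?_
      · exact (continuous_const.mul continuous_id).integrableOn_Ioc
      · intro r hr
        have hψb : ψ r ≤ M := le_trans (le_abs_self _) (hM r ⟨hr.1.le, hr.2⟩)
        exact mul_le_mul_of_nonneg_right (add_le_add_right hψb _) hr.1.le
    have hval : (∫ r in Set.Ioc (0 : ℝ) 1,
          ((1 / 2) * (s ^ 2 / 2) + (k : ℝ) ^ 2 * (s ^ 2 / 2) / 2 + M) * r)
        = ((1 / 2) * (s ^ 2 / 2) + (k : ℝ) ^ 2 * (s ^ 2 / 2) / 2 + M) / 2 := by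
      rw [← intervalIntegral.integral_of_le zero_le_one,
        intervalIntegral.integral_const_mul, integral_id]
      ring
    rw [hval] at hmono
    exact le_trans hmono (harith _ hk1)
  rw [hsplit, hval2]
  exact add_le_add_left hbd1 _

end LdGStmt17
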